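/- Let {|ψ_k⟩}_{k=1}^K ⊂ ℂ^d contain the standard basis vectors e_1, …, e_d, and suppose W is a unitary on ℂ^d such that every |ψ_k⟩ is an eigenvector of W (with unimodular eigenvalues e^{iα_k}). If the set also contains, for every pair m ≠ n, some state with nonzero components along both e_m and e_n, then all eigenvalues coincide, i.e. W is a unimodular scalar multiple of the identity. -/

import Mathlib

theorem stmt_10 {d K : ℕ} (W : Matrix (Fin d) (Fin d) ℂ)
    (hW : W ∈ Matrix.unitaryGroup (Fin d) ℂ)
    (ψ : Fin K → (Fin d → ℂ))
    (heig : ∀ k, ∃ α : ℝ, W.mulVec (ψ k) = Complex.exp (Complex.I * α) • ψ k)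
    (hstd : ∀ m : Fin d, ∃ k, ψ k = Pi.single m 1)
    (hpair : ∀ m n : Fin d, m ≠ n → ∃ k, ψ k m ≠ 0 ∧ ψ k n ≠ 0) :
    ∃ c : ℂ, ‖c‖ = 1 ∧ W = c • (1 : Matrix (Fin d) (Fin d) ℂ) := by
  -- columns of W
  have hcol : ∀ m : Fin d, ∃ α : ℝ,
      ∀ j, W j m = Complex.exp (Complex.I * α) * (if j = m then 1 else 0) := by
    intro m
    obtain ⟨k, hk⟩ := hstd m
    obtain ⟨α, hα⟩ := heig k
    refine ⟨α, fun j => ?_⟩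
    have := congrFun hα j
    rw [hk] at this
    simpa [Matrix.mulVec, dotProduct, Pi.single_apply, mul_comm] using this
  -- W is diagonal
  have hoff : ∀ j m : Fin d, j ≠ m → W j m = 0 := by
    intro j m hjm
    obtain ⟨α, hα⟩ := hcol m
    simp [hα j, hjm]
  -- diagonal entries are unimodular
  have habs : ∀ m : Fin d, ‖W m m‖ = 1 := by
    intro m
    obtain ⟨α, hα⟩ := hcol m
    simp [hα m, Complex.norm_exp]
  -- all diagonal entries equal
  have hdiag : ∀ m n : Fin d, W m m = W n n := by
    intro m n
    rcases eq_or_ne m n with h | h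
    · rw [h]
    · obtain ⟨k, hm, hn⟩ := hpair m n h
      obtain ⟨β, hβ⟩ := heig k
      have key : ∀ i : Fin d, ψ k i ≠ 0 → W i i = Complex.exp (Complex.I * β) := by
        intro i hi
        have := congrFun hβ i
        have hmv : (W.mulVec (ψ k)) i = W i i * ψ k i := by
          rw [Matrix.mulVec, dotProduct]
          rw [Finset.sum_eq_single i (fun b _ hb => by rw [hoff i b (Ne.symm hb)]; ring)
            (fun hmem => absurd (Finset.mem_univ i) hmem)]
        rw [hmv] at this
        have : (W i i - Complex.exp (Complex.I * β)) * ψ k i = 0 := by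
          rw [sub_mul, this]; simp [mul_comm]
        rcases mul_eq_zero.mp this with h0 | h0
        · linear_combination h0
        · exact absurd h0 hi
      rw [key m hm, key n hn]
  rcases Nat.eq_zero_or_pos d with hd | hd
  · refine ⟨1, by simp, ?_⟩
    subst hd
    ext i j
    exact i.elim0
  · set m0 : Fin d := ⟨0, hd⟩
    refine ⟨W m0 m0, habs m0, ?_⟩
    ext i j
    rcases eq_or_ne i j with h | h
    · subst h
      simp [Matrix.one_apply, hdiag i m0]
    · simp [hoff i j h, Matrix.one_apply, h]
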